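/- Computable cross norm criterion: Let ρ be a separable density matrix on ℂ^{d_A} ⊗ ℂ^{d_B} (i.e., ρ = Σ_k p_k σ_k ⊗ τ_k for some finitely many density matrices σ_k on ℂ^{d_A}, τ_k on ℂ^{d_B} and weights p_k ≥ 0 with Σ_k p_k = 1). Suppose ρ admits an operator Schmidt decomposition ρ = Σ_{i=1}^r λ_i A_i ⊗ B_i, where λ_i ≥ 0 and {A_i} and {B_i} are orthonormal families of matrices with respect to the Hilbert–Schmidt inner product (Tr(A_iᴴ A_j) = δ_{ij} and Tr(B_iᴴ B_j) = δ_{ij}). Then Σ_{i=1}^r λ_i ≤ 1. -/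

import Mathlib

open Matrix Kronecker ComplexOrder

/-- Trace norm `‖X‖_tr = Tr √(X Xᴴ)`. -/
noncomputable def traceNorm {m n : Type*} [Fintype m] [Fintype n] [DecidableEq m]
    (X : Matrix m n ℂ) : ℝ :=
  (((Matrix.posSemidef_self_mul_conjTranspose X).1.eigenvectorUnitary.1 *
      diagonal (((↑) : ℝ → ℂ) ∘ Real.sqrt ∘ (Matrix.posSemidef_self_mul_conjTranspose X).1.eigenvalues) *
      (star (Matrix.posSemidef_self_mul_conjTranspose X).1.eigenvectorUnitary : Matrix m m ℂ)).trace).re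

/-- A density matrix: positive semidefinite with trace 1. -/
def IsDensityMatrix {n : Type*} [Fintype n] (ρ : Matrix n n ℂ) : Prop :=
  ρ.PosSemidef ∧ ρ.trace = 1

/-- The realignment map: `R(ρ)_{(i,j),(k,l)} = ρ_{(i,k),(j,l)}`. -/
def realign {dA dB : ℕ} (ρ : Matrix (Fin dA × Fin dB) (Fin dA × Fin dB) ℂ) :
    Matrix (Fin dA × Fin dA) (Fin dB × Fin dB) ℂ :=
  fun p q => ρ (p.1, q.1) (p.2, q.2)

/-- Partial transpose on the second subsystem: `(ρ^{T₂})_{(i,k),(j,l)} = ρ_{(i,l),(j,k)}`. -/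
def ptranspose2 {d : ℕ} (ρ : Matrix (Fin d × Fin d) (Fin d × Fin d) ℂ) :
    Matrix (Fin d × Fin d) (Fin d × Fin d) ℂ :=
  fun p q => ρ (p.1, q.2) (q.1, p.2)

/-- The swap (exchange) operator `F_{(i,k),(j,l)} = δ_{il} δ_{kj}`. -/
def swapOp (d : ℕ) : Matrix (Fin d × Fin d) (Fin d × Fin d) ℂ :=
  fun p q => if p.1 = q.2 ∧ p.2 = q.1 then 1 else 0

/-- The unnormalized maximally entangled projector `(|Ω⟩⟨Ω|)_{(i,k),(j,l)} = δ_{ik} δ_{jl}`. -/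
def omegaProj (d : ℕ) : Matrix (Fin d × Fin d) (Fin d × Fin d) ℂ :=
  fun p q => if p.1 = p.2 ∧ q.1 = q.2 then 1 else 0

/-- Separability: `ρ` is a finite convex combination of products of density matrices. -/
def IsSeparableState {dA dB : ℕ} (ρ : Matrix (Fin dA × Fin dB) (Fin dA × Fin dB) ℂ) : Prop :=
  ∃ (m : ℕ) (p : Fin m → ℝ) (σ : Fin m → Matrix (Fin dA) (Fin dA) ℂ)
    (τ : Fin m → Matrix (Fin dB) (Fin dB) ℂ),
    (∀ k, 0 ≤ p k) ∧ (∑ k, p k = 1) ∧ (∀ k, IsDensityMatrix (σ k)) ∧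
    (∀ k, IsDensityMatrix (τ k)) ∧ ρ = ∑ k, (p k : ℂ) • (σ k ⊗ₖ τ k)

lemma pair_eq_trace {d : ℕ} (X Y : Matrix (Fin d) (Fin d) ℂ) :
    ∑ a : Fin d × Fin d, (starRingEnd ℂ) (X a.1 a.2) * Y a.1 a.2 = (Xᴴ * Y).trace := by
  rw [Fintype.sum_prod_type, Matrix.trace]
  simp only [Matrix.diag_apply, Matrix.mul_apply, Matrix.conjTranspose_apply]
  exact Finset.sum_comm

lemma euc_inner {ι : Type*} [Fintype ι] (x y : EuclideanSpace ℂ ι) :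
    (inner ℂ x y : ℂ) = ∑ q, (starRingEnd ℂ) (x q) * y q := by
  simp [PiLp.inner_apply, RCLike.inner_apply, mul_comm]

lemma kron_pair {dA dB : ℕ} (X Z : Matrix (Fin dA) (Fin dA) ℂ)
    (Y W : Matrix (Fin dB) (Fin dB) ℂ) :
    ∑ q : (Fin dA × Fin dB) × (Fin dA × Fin dB),
        (starRingEnd ℂ) ((X ⊗ₖ Y) q.1 q.2) * ((Z ⊗ₖ W) q.1 q.2)
      = (∑ a : Fin dA × Fin dA, (starRingEnd ℂ) (X a.1 a.2) * Z a.1 a.2)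
        * (∑ b : Fin dB × Fin dB, (starRingEnd ℂ) (Y b.1 b.2) * W b.1 b.2) := by
  have hR : (∑ a : Fin dA × Fin dA, (starRingEnd ℂ) (X a.1 a.2) * Z a.1 a.2)
        * (∑ b : Fin dB × Fin dB, (starRingEnd ℂ) (Y b.1 b.2) * W b.1 b.2)
      = ∑ x : (Fin dA × Fin dA) × (Fin dB × Fin dB),
          ((starRingEnd ℂ) (X x.1.1 x.1.2) * Z x.1.1 x.1.2)
          * ((starRingEnd ℂ) (Y x.2.1 x.2.2) * W x.2.1 x.2.2) := by
    rw [Finset.sum_mul_sum]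
    exact (Fintype.sum_prod_type fun x : (Fin dA × Fin dA) × (Fin dB × Fin dB) =>
      ((starRingEnd ℂ) (X x.1.1 x.1.2) * Z x.1.1 x.1.2)
      * ((starRingEnd ℂ) (Y x.2.1 x.2.2) * W x.2.1 x.2.2)).symm
  rw [hR]
  refine Fintype.sum_equiv ⟨fun q => ((q.1.1, q.2.1), (q.1.2, q.2.2)),
    fun x => ((x.1.1, x.2.1), (x.1.2, x.2.2)), fun q => rfl, fun x => rfl⟩ _ _ fun q => ?_
  dsimp [kroneckerMap_apply]
  rw [_root_.map_mul]
  ring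

lemma frob_le_one {d : ℕ} {σ : Matrix (Fin d) (Fin d) ℂ}
    (hpsd : σ.PosSemidef) (htr : σ.trace = 1) : ((σᴴ * σ).trace).re ≤ 1 := by
  have hherm := hpsd.1
  rw [hherm.eq]
  set U : Matrix (Fin d) (Fin d) ℂ := (hherm.eigenvectorUnitary : Matrix (Fin d) (Fin d) ℂ)
  set D : Matrix (Fin d) (Fin d) ℂ := Matrix.diagonal (RCLike.ofReal ∘ hherm.eigenvalues)
  have hUU : star U * U = 1 := by
    exact (Matrix.mem_unitaryGroup_iff').mp hherm.eigenvectorUnitary.2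
  have hspec : σ = U * D * star U := hherm.spectral_theorem
  have htrD : ∀ M : Matrix (Fin d) (Fin d) ℂ, (U * M * star U).trace = M.trace := by
    intro M
    rw [Matrix.trace_mul_cycle, hUU, Matrix.one_mul]
  have h2 : (σ * σ).trace = ∑ i, (hherm.eigenvalues i : ℂ) ^ 2 := by
    have : σ * σ = U * (D * D) * star U := by
      rw [hspec]
      calc U * D * star U * (U * D * star U)
          = U * (D * ((star U * U) * (D * star U))) := by noncomm_ring
        _ = U * (D * D) * star U := by rw [hUU]; noncomm_ring
    rw [this, htrD]
    simp [D, Matrix.diagonal_mul_diagonal, Matrix.trace_diagonal, sq]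
  have h1 : (∑ i, hherm.eigenvalues i) = 1 := by
    have : σ.trace = ∑ i, (hherm.eigenvalues i : ℂ) := by
      conv_lhs => rw [hspec]
      rw [htrD]; simp [D, Matrix.trace_diagonal]
    have h2 := (this.symm.trans htr)
    have := congrArg Complex.re h2
    simpa using this
  rw [h2]
  have hnn := fun i => hpsd.eigenvalues_nonneg i
  have : ∑ i, (hherm.eigenvalues i : ℂ) ^ 2 = ((∑ i, hherm.eigenvalues i ^ 2 : ℝ) : ℂ) := by
    push_cast; ring
  rw [this]
  norm_cast
  calc ∑ i, hherm.eigenvalues i ^ 2 ≤ ∑ i, hherm.eigenvalues i * 1 := by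
        refine Finset.sum_le_sum fun i _ => ?_
        rw [sq]
        exact mul_le_mul_of_nonneg_left
          (h1 ▸ Finset.single_le_sum (fun j _ => hnn j) (Finset.mem_univ i)) (hnn i)
    _ = 1 := by simpa using h1

def vecM {d : ℕ} (X : Matrix (Fin d) (Fin d) ℂ) : EuclideanSpace ℂ (Fin d × Fin d) :=
  WithLp.toLp 2 (fun a : Fin d × Fin d => X a.1 a.2)

lemma inner_vec_eq_trace {d : ℕ} (X Y : Matrix (Fin d) (Fin d) ℂ) :
    (inner (𝕜 := ℂ) (vecM X) (vecM Y) : ℂ) = (Xᴴ * Y).trace :=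
  (euc_inner _ _).trans (pair_eq_trace X Y)


/-- **Computable cross norm criterion.** If a separable density matrix admits an operator
Schmidt decomposition `ρ = Σ_i λ_i A_i ⊗ B_i` with `λ_i ≥ 0` and orthonormal families
`{A_i}`, `{B_i}`, then `Σ_i λ_i ≤ 1`. -/
theorem computable_cross_norm_criterion {dA dB : ℕ}
    (ρ : Matrix (Fin dA × Fin dB) (Fin dA × Fin dB) ℂ)
    (hρ : IsDensityMatrix ρ) (hsep : IsSeparableState ρ)
    (r : ℕ) (lam : Fin r → ℝ)
    (A : Fin r → Matrix (Fin dA) (Fin dA) ℂ)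
    (B : Fin r → Matrix (Fin dB) (Fin dB) ℂ)
    (hlam : ∀ i, 0 ≤ lam i)
    (hA : ∀ i j, ((A i)ᴴ * A j).trace = if i = j then 1 else 0)
    (hB : ∀ i j, ((B i)ᴴ * B j).trace = if i = j then 1 else 0)
    (hdec : ρ = ∑ i, (lam i : ℂ) • (A i ⊗ₖ B i)) :
    ∑ i, lam i ≤ 1 := by
  classical
  obtain ⟨m, p, σ, τ, hp, hps, hσ, hτ, hsepeq⟩ := hsep
  -- vectorizations
  set vA : Fin r → EuclideanSpace ℂ (Fin dA × Fin dA) := fun i => vecM (A i) with hvA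
  set vB : Fin r → EuclideanSpace ℂ (Fin dB × Fin dB) := fun i => vecM (B i) with hvB
  set sσ : Fin m → EuclideanSpace ℂ (Fin dA × Fin dA) := fun k => vecM (σ k) with hsσ
  set tτ : Fin m → EuclideanSpace ℂ (Fin dB × Fin dB) := fun k => vecM (τ k) with htτ
  have hiA : ∀ i (X : Matrix (Fin dA) (Fin dA) ℂ),
      (inner ℂ (vA i) (vecM X) : ℂ)
        = ((A i)ᴴ * X).trace := fun i X => inner_vec_eq_trace (A i) X
  have hiB : ∀ i (X : Matrix (Fin dB) (Fin dB) ℂ),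
      (inner ℂ (vB i) (vecM X) : ℂ)
        = ((B i)ᴴ * X).trace := fun i X => inner_vec_eq_trace (B i) X
  have honA : Orthonormal ℂ vA := by
    rw [orthonormal_iff_ite]
    intro i j
    have := hiA i (A j)
    rw [this, hA]
  have honB : Orthonormal ℂ vB := by
    rw [orthonormal_iff_ite]
    intro i j
    have := hiB i (B j)
    rw [this, hB]
  -- the pairing of A i ⊗ B i against ρ, two ways
  have hPlam : ∀ i, (∑ q : (Fin dA × Fin dB) × (Fin dA × Fin dB),
      (starRingEnd ℂ) ((A i ⊗ₖ B i) q.1 q.2) * ρ q.1 q.2) = (lam i : ℂ) := by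
    intro i
    conv_lhs => rw [hdec]
    simp only [Matrix.sum_apply, Matrix.smul_apply, smul_eq_mul, Finset.mul_sum]
    rw [Finset.sum_comm]
    have hterm : ∀ j, ∑ q : (Fin dA × Fin dB) × (Fin dA × Fin dB),
        (starRingEnd ℂ) ((A i ⊗ₖ B i) q.1 q.2) * ((lam j : ℂ) * (A j ⊗ₖ B j) q.1 q.2)
        = (lam j : ℂ) * (((A i)ᴴ * A j).trace * ((B i)ᴴ * B j).trace) := by
      intro j
      rw [← pair_eq_trace, ← pair_eq_trace, ← kron_pair, Finset.mul_sum]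
      exact Finset.sum_congr rfl fun q _ => by ring
    simp only [hterm, hA, hB]
    simp
  have hPsep : ∀ i, (∑ q : (Fin dA × Fin dB) × (Fin dA × Fin dB),
      (starRingEnd ℂ) ((A i ⊗ₖ B i) q.1 q.2) * ρ q.1 q.2)
      = ∑ k, (p k : ℂ) * ((inner ℂ (vA i) (sσ k) : ℂ) * (inner ℂ (vB i) (tτ k) : ℂ)) := by
    intro i
    conv_lhs => rw [hsepeq]
    simp only [Matrix.sum_apply, Matrix.smul_apply, smul_eq_mul, Finset.mul_sum]
    rw [Finset.sum_comm]
    refine Finset.sum_congr rfl fun k _ => ?_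
    rw [hiA i (σ k), hiB i (τ k), ← pair_eq_trace, ← pair_eq_trace, ← kron_pair,
      Finset.mul_sum]
    exact Finset.sum_congr rfl fun q _ => by ring
  -- combine
  have hmain : ((∑ i, lam i : ℝ) : ℂ)
      = ∑ k, (p k : ℂ) * ∑ i, (inner ℂ (vA i) (sσ k) : ℂ) * (inner ℂ (vB i) (tτ k) : ℂ) := by
    push_cast
    calc (∑ i, (lam i : ℂ)) = ∑ i, ∑ k, (p k : ℂ) *
          ((inner ℂ (vA i) (sσ k) : ℂ) * (inner ℂ (vB i) (tτ k) : ℂ)) := by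
          refine Finset.sum_congr rfl fun i _ => ?_
          rw [← hPsep i, hPlam i]
      _ = ∑ k, (p k : ℂ) * ∑ i, (inner ℂ (vA i) (sσ k) : ℂ) * (inner ℂ (vB i) (tτ k) : ℂ) := by
          rw [Finset.sum_comm]
          exact Finset.sum_congr rfl fun k _ => by rw [Finset.mul_sum]
  -- real parts
  have hre : ∑ i, lam i = ∑ k, p k *
      (∑ i, (inner ℂ (vA i) (sσ k) : ℂ) * (inner ℂ (vB i) (tτ k) : ℂ)).re := by
    have := congrArg Complex.re hmain
    simpa [Complex.re_sum, Complex.ofReal_mul, Complex.mul_re] using this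
  rw [hre]
  -- bound each k-term by p k
  have hbound : ∀ k,
      (∑ i, (inner ℂ (vA i) (sσ k) : ℂ) * (inner ℂ (vB i) (tτ k) : ℂ)).re ≤ 1 := by
    intro k
    have hstep1 : (∑ i, (inner ℂ (vA i) (sσ k) : ℂ) * (inner ℂ (vB i) (tτ k) : ℂ)).re
        ≤ ∑ i, ‖(inner ℂ (vA i) (sσ k) : ℂ)‖ * ‖(inner ℂ (vB i) (tτ k) : ℂ)‖ := by
      calc (∑ i, (inner ℂ (vA i) (sσ k) : ℂ) * (inner ℂ (vB i) (tτ k) : ℂ)).re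
          ≤ ‖∑ i, (inner ℂ (vA i) (sσ k) : ℂ) * (inner ℂ (vB i) (tτ k) : ℂ)‖ :=
            Complex.re_le_norm _
        _ = ‖∑ i, (inner ℂ (vA i) (sσ k) : ℂ) * (inner ℂ (vB i) (tτ k) : ℂ)‖ :=
            rfl
        _ ≤ ∑ i, ‖(inner ℂ (vA i) (sσ k) : ℂ) * (inner ℂ (vB i) (tτ k) : ℂ)‖ := norm_sum_le _ _
        _ = ∑ i, ‖(inner ℂ (vA i) (sσ k) : ℂ)‖ * ‖(inner ℂ (vB i) (tτ k) : ℂ)‖ :=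
            Finset.sum_congr rfl fun i _ => norm_mul _ _
    have hA2 : ∑ i, ‖(inner ℂ (vA i) (sσ k) : ℂ)‖ ^ 2 ≤ 1 := by
      refine le_trans (honA.sum_inner_products_le (sσ k)) ?_
      have h1 : ‖sσ k‖ ^ 2 = (((σ k)ᴴ * σ k).trace).re := by
        rw [← inner_self_eq_norm_sq (𝕜 := ℂ) (sσ k)]
        have := inner_vec_eq_trace (σ k) (σ k)
        rw [show (inner (𝕜 := ℂ) (sσ k) (sσ k) : ℂ) = ((σ k)ᴴ * σ k).trace from this]
        rfl
      rw [h1]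
      exact frob_le_one (hσ k).1 (hσ k).2
    have hB2 : ∑ i, ‖(inner ℂ (vB i) (tτ k) : ℂ)‖ ^ 2 ≤ 1 := by
      refine le_trans (honB.sum_inner_products_le (tτ k)) ?_
      have h1 : ‖tτ k‖ ^ 2 = (((τ k)ᴴ * τ k).trace).re := by
        rw [← inner_self_eq_norm_sq (𝕜 := ℂ) (tτ k)]
        have := inner_vec_eq_trace (τ k) (τ k)
        rw [show (inner (𝕜 := ℂ) (tτ k) (tτ k) : ℂ) = ((τ k)ᴴ * τ k).trace from this]
        rfl
      rw [h1]
      exact frob_le_one (hτ k).1 (hτ k).2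
    have hcs : (∑ i, ‖(inner ℂ (vA i) (sσ k) : ℂ)‖ * ‖(inner ℂ (vB i) (tτ k) : ℂ)‖) ^ 2
        ≤ (∑ i, ‖(inner ℂ (vA i) (sσ k) : ℂ)‖ ^ 2) * ∑ i, ‖(inner ℂ (vB i) (tτ k) : ℂ)‖ ^ 2 :=
      Finset.sum_mul_sq_le_sq_mul_sq _ _ _
    have hnn : 0 ≤ ∑ i, ‖(inner ℂ (vA i) (sσ k) : ℂ)‖ * ‖(inner ℂ (vB i) (tτ k) : ℂ)‖ :=
      Finset.sum_nonneg fun i _ => mul_nonneg (norm_nonneg _) (norm_nonneg _)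
    nlinarith [hstep1, hcs, hA2, hB2, hnn,
      Finset.sum_nonneg (fun i (_ : i ∈ Finset.univ) =>
        sq_nonneg ‖(inner ℂ (vA i) (sσ k) : ℂ)‖)]
  calc ∑ k, p k * (∑ i, (inner ℂ (vA i) (sσ k) : ℂ) * (inner ℂ (vB i) (tτ k) : ℂ)).re
      ≤ ∑ k, p k * 1 :=
        Finset.sum_le_sum fun k _ => mul_le_mul_of_nonneg_left (hbound k) (hp k)
    _ = 1 := by simpa using hps
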